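/- Let {x,y}, Z, W be pairwise disjoint node sets in an ADMG G (with x and y single nodes). Then (Z,W) is a valid conditional instrumental set relative to (x,y) in G if and only if (i) no directed path from x to y contains a node of W, (ii) there exists a walk from Z to x that is open given W, and (iii) there does not exist a walk from Z to y that is open given W and does not end with a segment of the form x → … → y (a final subwalk that starts at x and consists solely of directed edges pointing toward y). -/

import Mathlib

/-- Edge type of a step on a walk in a mixed graph, relative to the direction of travel:
`fwd` is a directed edge pointing forward, `back` a directed edge pointing backward,
`bi` a bidirected edge. -/
inductive EdgeDir : Type
  | fwd
  | back
  | bi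
  deriving DecidableEq

/-- The edge has an arrowhead at its second endpoint. -/
def EdgeDir.arrowSnd : EdgeDir → Prop
  | .fwd => True
  | .back => False
  | .bi => True

/-- The edge has an arrowhead at its first endpoint. -/
def EdgeDir.arrowFst : EdgeDir → Prop
  | .fwd => False
  | .back => True
  | .bi => True

/-- The common node between consecutive walk edges `e₁, e₂` is a collider:
both edges have an arrowhead at it. -/
def IsColliderPair (e₁ e₂ : EdgeDir) : Prop := e₁.arrowSnd ∧ e₂.arrowFst

/-- A mixed graph: a set of directed edges and a set of bidirected edges on node type `V`. -/
structure MixedGraph (V : Type) where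
  dir : V → V → Prop
  bidir : V → V → Prop

namespace MixedGraph

variable {V : Type}

/-- `G` is an acyclic directed mixed graph: the bidirected edges are symmetric and
the directed edges contain no directed cycle. -/
def IsADMG (G : MixedGraph V) : Prop :=
  (∀ a b, G.bidir a b → G.bidir b a) ∧ ∀ v, ¬ Relation.TransGen G.dir v v

/-- There is an edge of type `e` between `a` and `b` (in this travel direction). -/
def IsEdge (G : MixedGraph V) : EdgeDir → V → V → Prop
  | .fwd, a, b => G.dir a b
  | .back, a, b => G.dir b a
  | .bi, a, b => G.bidir a b

/-- Walks in a mixed graph. -/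
inductive Walk (G : MixedGraph V) : V → V → Type
  | nil (v : V) : Walk G v v
  | cons {a b c : V} (e : EdgeDir) (hab : G.IsEdge e a b) (w : Walk G b c) : Walk G a c

namespace Walk

variable {G : MixedGraph V}

/-- The list of nodes of a walk, in order (with multiplicity). -/
def support : {a b : V} → G.Walk a b → List V
  | a, _, .nil _ => [a]
  | a, _, .cons _ _ w => a :: w.support

/-- The list of edge types along a walk. -/
def edges : {a b : V} → G.Walk a b → List EdgeDir
  | _, _, .nil _ => []
  | _, _, .cons e _ w => e :: w.edges

/-- All edges of the walk are directed and point toward the end of the walk. -/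
def AllFwd : {a b : V} → G.Walk a b → Prop
  | _, _, .nil _ => True
  | _, _, .cons e _ w => e = EdgeDir.fwd ∧ w.AllFwd

/-- Auxiliary predicate: the current node `b` was reached via an edge of type `e₁` and
the walk continues with `w`; every interior node from `b` onward that is a collider is in `W`
and every interior node from `b` onward that is a non-collider is not in `W`. -/
def openFrom (W : Set V) : EdgeDir → (b : V) → {c : V} → G.Walk b c → Prop
  | _, _, _, .nil _ => True
  | e₁, b, _, @Walk.cons _ _ _ m _ e₂ _ w =>
      (IsColliderPair e₁ e₂ → b ∈ W) ∧ (¬ IsColliderPair e₁ e₂ → b ∉ W) ∧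
      openFrom W e₂ m w

/-- A walk is open given `W` if every collider on it lies in `W` and no non-collider
on it lies in `W`. -/
def IsOpen {a b : V} (W : Set V) (w : G.Walk a b) : Prop :=
  match w with
  | .nil _ => True
  | @Walk.cons _ _ _ m _ e _ w' => openFrom W e m w'

/-- The walk ends with a segment of the form `x → ⋯ → end`: it has a final subwalk that
starts at `x` and consists solely of directed edges pointing toward the end of the walk. -/
def EndsWithDirFrom (x : V) : {a b : V} → G.Walk a b → Prop
  | a, _, .nil _ => a = x
  | a, _, .cons e _ w => (a = x ∧ e = EdgeDir.fwd ∧ w.AllFwd) ∨ w.EndsWithDirFrom x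

/-- The first edge of the walk has an arrowhead at the start node. -/
def firstArrowIn : {a b : V} → G.Walk a b → Prop
  | _, _, .nil _ => False
  | _, _, .cons e _ _ => e.arrowFst

/-- The last edge of the walk has an arrowhead at the end node. -/
def lastArrowIn : {a b : V} → G.Walk a b → Prop
  | _, _, .nil _ => False
  | _, _, .cons e _ (.nil _) => e.arrowSnd
  | _, _, .cons _ _ (.cons e h w) => lastArrowIn (.cons e h w)

/-- For each interior node of the walk, the pair of edges incident to it on the walk,
together with the node itself. -/
def colliderTriples {a b : V} (w : G.Walk a b) : List (EdgeDir × EdgeDir × V) :=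
  w.edges.zip (w.edges.tail.zip w.support.tail)

end Walk

/-- `X` and `Z` are d-connected given `C`: some walk from a node of `X` to a node of `Z`
is open given `C`. -/
def dConn (G : MixedGraph V) (X Z C : Set V) : Prop :=
  ∃ x ∈ X, ∃ z ∈ Z, ∃ w : G.Walk x z, w.IsOpen C

/-- The descendants of `x` (including `x` itself). -/
def desc (G : MixedGraph V) (x : V) : Set V := {v | Relation.ReflTransGen G.dir x v}

/-- The descendants of a set of nodes. -/
def descSet (G : MixedGraph V) (S : Set V) : Set V :=
  {v | ∃ s ∈ S, Relation.ReflTransGen G.dir s v}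

/-- The ancestors of a set of nodes (including the set itself). -/
def anc (G : MixedGraph V) (S : Set V) : Set V :=
  {v | ∃ s ∈ S, Relation.ReflTransGen G.dir v s}

/-- The parents of a set of nodes. -/
def pa (G : MixedGraph V) (S : Set V) : Set V := {p | ∃ s ∈ S, G.dir p s}

/-- `causal_G(x,y)`: the nodes `v ≠ x` lying on a proper directed path from `x` to `y`. -/
def causal (G : MixedGraph V) (x y : V) : Set V :=
  {v | v ≠ x ∧ ∃ w : G.Walk x y, w.AllFwd ∧ w.support.Nodup ∧ v ∈ w.support}

/-- The forbidden nodes `forb_G(x,y) = de_G(causal_G(x,y)) ∪ {x}`. -/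
def forb (G : MixedGraph V) (x y : V) : Set V := G.descSet (G.causal x y) ∪ {x}

/-- `G̃`: the graph `G` with every directed edge from `x` to a node of `causal_G(x,y)` removed. -/
def tilde (G : MixedGraph V) (x y : V) : MixedGraph V where
  dir a b := G.dir a b ∧ ¬(a = x ∧ b ∈ G.causal x y)
  bidir := G.bidir

/-- `(Z, W)` is a valid conditional instrumental set relative to `(x, y)` in `G`
(the graphical criterion of Henckel et al., taken as the definition): the sets
`{x,y}`, `Z`, `W` are pairwise disjoint, `(Z ∪ W) ∩ forb_G(x,y) = ∅`, `x ⊄⊥_G Z | W`,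
and `y ⊥_G̃ Z | W`. -/
def ValidCIS (G : MixedGraph V) (x y : V) (Z W : Set V) : Prop :=
  x ≠ y ∧ x ∉ Z ∧ x ∉ W ∧ y ∉ Z ∧ y ∉ W ∧ Disjoint Z W ∧
  (Z ∪ W) ∩ G.forb x y = ∅ ∧
  G.dConn {x} Z W ∧
  ¬ (G.tilde x y).dConn {y} Z W

/-- `W` is a nearest separator with respect to `(y, z, R)` in `H` (with ambient node `x`). -/
def NearestSep (H : MixedGraph V) (x y z : V) (R : Set V) (W : Set V) : Prop :=
  W ⊆ R ∩ H.anc {y, z} ∧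
  ¬ H.dConn {y} {z} W ∧
  ∀ w ∈ W, ∀ W' ⊆ (R ∩ H.anc {y, z}) \ {x, y, w},
    H.dConn {w} {z} W' → H.dConn {y} {z} W'

/-- `dis_{G,W}(u)`: the nodes connected to `u` via a path of bidirected edges with no
node in `W` (with `u ∈ dis_{G,W}(u)`). -/
def dis (G : MixedGraph V) (W : Set V) (u : V) : Set V :=
  {v | Relation.ReflTransGen (fun a b => G.bidir a b ∧ a ∉ W ∧ b ∉ W) u v}

/-- `dis⁺_{G,W}(u) = (dis_{G,W}(u) ∪ pa_G(dis_{G,W}(u))) ∖ W`. -/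
def disPlus (G : MixedGraph V) (W : Set V) (u : V) : Set V :=
  (G.dis W u ∪ G.pa (G.dis W u)) \ W

/-- `W^opt` of Henckel et al. -/
def Wopt (G : MixedGraph V) (x y : V) : Set V := G.disPlus {x} y \ {x, y}

/-- `Z^opt` of Henckel et al. -/
def Zopt (G : MixedGraph V) (x y : V) : Set V :=
  G.disPlus {y} x \ (G.Wopt x y ∪ {x, y})

/-- The latent projection of `G` over the latent nodes `L`: a directed edge exactly when
`G` has a directed path whose non-endpoint nodes lie in `L`, and a bidirected edge exactly
when `G` has a path whose non-endpoint nodes are non-colliders lying in `L` and whose first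
and last edges have an arrowhead at the respective endpoint. -/
def latentProj (G : MixedGraph V) (L : Set V) : MixedGraph V where
  dir a b := a ∉ L ∧ b ∉ L ∧ ∃ w : G.Walk a b,
    w.edges ≠ [] ∧ w.AllFwd ∧ w.support.Nodup ∧ ∀ v ∈ w.support.tail.dropLast, v ∈ L
  bidir a b := a ∉ L ∧ b ∉ L ∧ ∃ w : G.Walk a b,
    w.support.Nodup ∧ w.firstArrowIn ∧ w.lastArrowIn ∧
    (∀ v ∈ w.support.tail.dropLast, v ∈ L) ∧
    ∀ t ∈ w.colliderTriples, ¬ IsColliderPair t.1 t.2.1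

end MixedGraph

/-- The moralization of a DAG with edge relation `E` contains the (undirected) edge
`a − b` (for `a ≠ b`) exactly when `E a b`, or `E b a`, or `a` and `b` have a common child. -/
def MoralEdge {α : Type} (E : α → α → Prop) (a b : α) : Prop :=
  a ≠ b ∧ (E a b ∨ E b a ∨ ∃ c, E a c ∧ E b c)

section AuxiliaryLemmas

namespace EdgeDir

/-- Reversal of an edge type (for traversing the edge in the opposite direction). -/
def rev : EdgeDir → EdgeDir
  | .fwd => .back
  | .back => .fwd
  | .bi => .bi

end EdgeDir

lemma isColliderPair_rev {e f : EdgeDir} :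
    IsColliderPair f.rev e.rev ↔ IsColliderPair e f := by
  cases e <;> cases f <;>
    simp [IsColliderPair, EdgeDir.rev, EdgeDir.arrowSnd, EdgeDir.arrowFst]

lemma not_collider_into_fwd {e : EdgeDir} : ¬ IsColliderPair e .fwd := fun h => h.2

lemma not_collider_from_back {e : EdgeDir} : ¬ IsColliderPair .back e := fun h => h.1

lemma collider_fwd_back : IsColliderPair .fwd .back := ⟨trivial, trivial⟩

namespace MixedGraph

variable {V : Type} {G : MixedGraph V}

/-- The bidirected part of the graph is symmetric. -/
def Symm (G : MixedGraph V) : Prop := ∀ a b, G.bidir a b → G.bidir b a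

lemma isEdge_rev (hs : G.Symm) {e : EdgeDir} {a b : V} (h : G.IsEdge e a b) :
    G.IsEdge e.rev b a := by
  cases e
  · exact h
  · exact h
  · exact hs a b h

/-- pairwise compatibility condition on a node between two consecutive edges. -/
def OkP (W : Set V) (e f : EdgeDir) (v : V) : Prop :=
  (IsColliderPair e f → v ∈ W) ∧ (¬ IsColliderPair e f → v ∉ W)

lemma okP_rev {W : Set V} {e f : EdgeDir} {v : V} (h : OkP W e f v) :
    OkP W f.rev e.rev v := by
  constructor
  · exact fun hc => h.1 (isColliderPair_rev.mp hc)
  · exact fun hc => h.2 (fun hc2 => hc (isColliderPair_rev.mpr hc2))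

namespace Walk

/-- Concatenation of walks. -/
def append : {a b c : V} → G.Walk a b → G.Walk b c → G.Walk a c
  | _, _, _, .nil _, q => q
  | _, _, _, .cons e h w, q => .cons e h (w.append q)

@[simp] lemma nil_append {a c : V} (q : G.Walk a c) : (Walk.nil a).append q = q := rfl

@[simp] lemma cons_append {a m b c : V} (e : EdgeDir) (h : G.IsEdge e a m)
    (w : G.Walk m b) (q : G.Walk b c) :
    (Walk.cons e h w).append q = .cons e h (w.append q) := rfl

lemma append_assoc {a b c d : V} (p : G.Walk a b) (q : G.Walk b c) (r : G.Walk c d) :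
    (p.append q).append r = p.append (q.append r) := by
  induction p with
  | nil => rfl
  | cons e h w ih => simp [cons_append, ih]

/-- Reverse a walk, pushing onto an accumulator. -/
def revAppend (hs : G.Symm) : {a b : V} → G.Walk a b → {d : V} → G.Walk a d → G.Walk b d
  | _, _, .nil _, _, acc => acc
  | _, _, .cons e h w, _, acc => w.revAppend hs (.cons e.rev (isEdge_rev hs h) acc)

/-- Reverse of a walk. -/
def reverse (hs : G.Symm) {a b : V} (w : G.Walk a b) : G.Walk b a :=
  w.revAppend hs (.nil a)

lemma revAppend_eq (hs : G.Symm) {a b d : V} (w : G.Walk a b) (acc : G.Walk a d) :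
    w.revAppend hs acc = (w.reverse hs).append acc := by
  induction w generalizing d with
  | nil => rfl
  | cons e h w ih =>
      show w.revAppend hs _ = ((Walk.cons e h w).reverse hs).append acc
      rw [ih]
      show _ = (w.revAppend hs _).append acc
      rw [ih, append_assoc]
      rfl

lemma reverse_cons (hs : G.Symm) {a m b : V} (e : EdgeDir) (h : G.IsEdge e a m)
    (w : G.Walk m b) :
    (Walk.cons e h w).reverse hs
      = (w.reverse hs).append (.cons e.rev (isEdge_rev hs h) (.nil a)) := by
  show w.revAppend hs _ = _
  rw [revAppend_eq]

@[simp] lemma reverse_nil (hs : G.Symm) (a : V) :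
    (Walk.nil a : G.Walk a a).reverse hs = .nil a := rfl

/- ### openness lemmas -/

lemma openFrom_cons {W : Set V} {e f : EdgeDir} {b m c : V} (hf : G.IsEdge f b m)
    (w : G.Walk m c) :
    openFrom W e b (.cons f hf w) ↔ OkP W e f b ∧ openFrom W f m w := by
  show _ ∧ _ ∧ _ ↔ _; rw [← and_assoc]; rfl

@[simp] lemma openFrom_nil {W : Set V} {e : EdgeDir} {b : V} :
    openFrom W e b (Walk.nil b : G.Walk b b) := trivial

lemma isOpen_cons {W : Set V} {e : EdgeDir} {a m c : V} (h : G.IsEdge e a m)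
    (w : G.Walk m c) : (Walk.cons e h w).IsOpen W ↔ openFrom W e m w := Iff.rfl

lemma isOpen_of_openFrom {W : Set V} {e : EdgeDir} {b c : V} {w : G.Walk b c}
    (h : openFrom W e b w) : w.IsOpen W := by
  cases w with
  | nil => trivial
  | cons f hf w' => exact ((openFrom_cons hf w').mp h).2

lemma openFrom_append {W : Set V} {e : EdgeDir} {v b c : V} {p : G.Walk v b}
    {M : G.Walk b c} (hp : openFrom W e v p) (hM : ∀ e', openFrom W e' b M) :
    openFrom W e v (p.append M) := by
  induction p generalizing e with
  | nil => exact hM e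
  | cons f hf p' ih =>
      rw [cons_append, openFrom_cons]
      rw [openFrom_cons] at hp
      exact ⟨hp.1, ih hp.2 hM⟩

lemma isOpen_append {W : Set V} {a b c : V} {p : G.Walk a b} {M : G.Walk b c}
    (hp : p.IsOpen W) (hM : ∀ e', openFrom W e' b M) :
    (p.append M).IsOpen W := by
  cases p with
  | nil => exact isOpen_of_openFrom (hM .fwd)
  | cons f hf p' =>
      rw [cons_append, isOpen_cons]
      exact openFrom_append ((isOpen_cons hf p').mp hp) hM

lemma isOpen_revAppend (hs : G.Symm) {W : Set V} :
    ∀ {m mm c d : V} (f : EdgeDir) (hf : G.IsEdge f m mm) (w : G.Walk mm c)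
      (acc : G.Walk m d), openFrom W f mm w → openFrom W f.rev m acc →
      ((Walk.cons f hf w).revAppend hs acc).IsOpen W := by
  intro m mm c d f hf w
  induction w generalizing m d f with
  | nil =>
      intro acc _ hacc
      show (Walk.cons f.rev (isEdge_rev hs hf) acc).IsOpen W
      exact hacc
  | cons g hg w'' ih =>
      intro acc hw hacc
      rw [openFrom_cons] at hw
      show ((Walk.cons g hg w'').revAppend hs (.cons f.rev (isEdge_rev hs hf) acc)).IsOpen W
      refine ih g hg _ hw.2 ?_
      rw [openFrom_cons]
      exact ⟨okP_rev hw.1, hacc⟩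

lemma isOpen_reverse (hs : G.Symm) {W : Set V} {a b : V} {w : G.Walk a b}
    (h : w.IsOpen W) : (w.reverse hs).IsOpen W := by
  cases w with
  | nil => trivial
  | cons f hf w' =>
      exact isOpen_revAppend hs f hf w' (.nil a) ((isOpen_cons hf w').mp h) trivial

end Walk

end MixedGraph

end AuxiliaryLemmas

namespace MixedGraph

variable {V : Type} {G : MixedGraph V}

namespace Walk

@[simp] lemma support_nil (a : V) : (Walk.nil a : G.Walk a a).support = [a] := rfl

@[simp] lemma support_cons {a m b : V} (e : EdgeDir) (h : G.IsEdge e a m) (w : G.Walk m b) :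
    (Walk.cons e h w).support = a :: w.support := rfl

lemma support_head : ∀ {a b : V} (w : G.Walk a b), w.support = a :: w.support.tail
  | _, _, .nil _ => rfl
  | _, _, .cons _ _ _ => rfl

lemma start_mem_support {a b : V} (w : G.Walk a b) : a ∈ w.support := by
  rw [support_head]; exact List.mem_cons_self

lemma support_ne_nil {a b : V} (w : G.Walk a b) : w.support ≠ [] := by
  rw [support_head]; exact List.cons_ne_nil _ _

lemma support_append {a b c : V} (p : G.Walk a b) (q : G.Walk b c) :
    (p.append q).support = p.support ++ q.support.tail := by
  induction p with
  | nil => exact support_head q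
  | cons e h p' ih =>
      show _ :: (p'.append q).support = (_ :: p'.support) ++ q.support.tail
      rw [ih, List.cons_append]

lemma support_reverse (hs : G.Symm) {a b : V} (w : G.Walk a b) :
    (w.reverse hs).support = w.support.reverse := by
  induction w with
  | nil => rfl
  | cons e h w' ih =>
      rw [reverse_cons, support_append, ih]
      show _ = (_ :: w'.support).reverse
      rw [List.reverse_cons]
      rfl

lemma allFwd_append {a b c : V} {p : G.Walk a b} {q : G.Walk b c} :
    (p.append q).AllFwd ↔ p.AllFwd ∧ q.AllFwd := by
  induction p with
  | nil => simp [AllFwd]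
  | cons e h p' ih =>
      show (e = EdgeDir.fwd ∧ (p'.append q).AllFwd) ↔ (e = EdgeDir.fwd ∧ _) ∧ _
      rw [ih]; tauto

lemma allFwd_rtg_of_mem {a b : V} {w : G.Walk a b} (hF : w.AllFwd) :
    ∀ v ∈ w.support, Relation.ReflTransGen G.dir a v := by
  induction w with
  | nil u =>
      intro v hv
      have : v = u := by simpa [support] using hv
      subst this; exact Relation.ReflTransGen.refl
  | @cons u m c e h w' ih =>
      intro v hv
      obtain ⟨he, hF'⟩ := hF
      subst he
      rcases (List.mem_cons.mp hv) with rfl | hv'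
      · exact Relation.ReflTransGen.refl
      · exact Relation.ReflTransGen.head h (ih hF' v hv')

lemma allFwd_rtg {a b : V} {w : G.Walk a b} (hF : w.AllFwd) :
    Relation.ReflTransGen G.dir a b := by
  induction w with
  | nil => exact Relation.ReflTransGen.refl
  | cons e h w' ih =>
      obtain ⟨he, hF'⟩ := hF; subst he
      exact Relation.ReflTransGen.head h (ih hF')

lemma exists_allFwd_of_rtg {a b : V} (h : Relation.ReflTransGen G.dir a b) :
    ∃ w : G.Walk a b, w.AllFwd := by
  induction h using Relation.ReflTransGen.head_induction_on with
  | refl => exact ⟨.nil b, trivial⟩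
  | head hab _ ih =>
      obtain ⟨w, hw⟩ := ih
      exact ⟨.cons .fwd hab w, rfl, hw⟩

lemma allFwd_nodup (hA : ∀ v, ¬ Relation.TransGen G.dir v v) :
    ∀ {a b : V} (w : G.Walk a b), w.AllFwd → w.support.Nodup := by
  intro a b w
  induction w with
  | nil => intro _; simp [support]
  | @cons u m c e h w' ih =>
      rintro ⟨rfl, hF'⟩
      show (_ :: w'.support).Nodup
      rw [List.nodup_cons]
      refine ⟨fun hmem => ?_, ih hF'⟩
      exact hA u (Relation.TransGen.head' h (allFwd_rtg_of_mem hF' u hmem))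

lemma split_at_mem : ∀ {a b : V} (w : G.Walk a b) (c : V), c ∈ w.support →
    ∃ (w₁ : G.Walk a c) (w₂ : G.Walk c b), w = w₁.append w₂ := by
  intro a b w
  induction w with
  | nil u =>
      intro c hc
      have : c = u := by simpa [support] using hc
      subst this
      exact ⟨.nil c, .nil c, rfl⟩
  | cons e h w' ih =>
      intro c hc
      rcases List.mem_cons.mp hc with rfl | hc'
      · exact ⟨.nil c, .cons e h w', rfl⟩
      · obtain ⟨w₁, w₂, heq⟩ := ih c hc'
        exact ⟨.cons e h w₁, w₂, by rw [cons_append, heq]⟩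

lemma endsWith_append {x : V} : ∀ {a b c : V} (p : G.Walk a b) (q : G.Walk b c),
    (p.append q).EndsWithDirFrom x → q.EndsWithDirFrom x ∨ q.AllFwd := by
  intro a b c p
  induction p with
  | nil => intro q h; exact Or.inl h
  | cons e hf p' ih =>
      intro q h
      rcases h with ⟨_, _, hAF⟩ | h'
      · exact Or.inr (allFwd_append.mp hAF).2
      · exact ih q h'

lemma mem_support_of_endsWith {x : V} : ∀ {a b : V} (w : G.Walk a b),
    w.EndsWithDirFrom x → x ∈ w.support := by
  intro a b w
  induction w with
  | nil => intro h; simp [support, h.symm]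
  | cons e hf w' ih =>
      intro h
      rcases h with ⟨rfl, _, _⟩ | h'
      · exact start_mem_support _
      · exact List.mem_cons_of_mem _ (ih h')

end Walk

end MixedGraph

namespace MixedGraph

variable {V : Type} {G : MixedGraph V}

lemma dropLast_cons_of_ne_nil {α : Type _} (a : α) {l : List α} (h : l ≠ []) :
    (a :: l).dropLast = a :: l.dropLast := by
  cases l with
  | nil => exact absurd rfl h
  | cons b l' => rfl

namespace Walk

/-- An all-forward walk whose support avoids `W` is open with any incoming edge. -/
lemma openFrom_allFwd_avoid {W : Set V} : ∀ {a b : V} (q : G.Walk a b), q.AllFwd →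
    (∀ u ∈ q.support, u ∉ W) → ∀ e, openFrom W e a q := by
  intro a b q
  induction q with
  | nil => intro _ _ _; trivial
  | @cons u m c f h q' ih =>
      rintro ⟨rfl, hF⟩ hW e
      rw [openFrom_cons]
      refine ⟨⟨fun hc => absurd hc not_collider_into_fwd,
        fun _ => hW u (start_mem_support _)⟩, ?_⟩
      exact ih hF (fun v hv => hW v (List.mem_cons_of_mem _ hv)) .fwd

/-- Going up an all-forward walk (whose non-final nodes avoid `W`). -/
lemma openFrom_up {W : Set V} : ∀ {a t y' : V} (q : G.Walk a t), q.AllFwd →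
    (∀ u ∈ q.support.dropLast, u ∉ W) → {cont : G.Walk t y'} →
    openFrom W .fwd t cont → openFrom W .fwd a (q.append cont) := by
  intro a t y' q
  induction q with
  | nil => intro _ _ _ hc; exact hc
  | @cons u m c f h q' ih =>
      rintro ⟨rfl, hF⟩ hW cont hc
      rw [cons_append, openFrom_cons]
      have hu : u ∉ W := by
        apply hW
        rw [support_cons, dropLast_cons_of_ne_nil _ (support_ne_nil q')]
        exact List.mem_cons_self
      refine ⟨⟨fun hcol => absurd hcol not_collider_into_fwd, fun _ => hu⟩, ?_⟩
      refine ih hF (fun v hv => hW v ?_) hc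
      rw [support_cons, dropLast_cons_of_ne_nil _ (support_ne_nil q')]
      exact List.mem_cons_of_mem _ hv

/-- Going down the reverse of an all-forward walk into a `W`-collider at the top. -/
lemma openFrom_mountain (hs : G.Symm) {W : Set V} : ∀ {c t y' : V} (q : G.Walk c t),
    q.AllFwd → (∀ u ∈ q.support.dropLast, u ∉ W) → t ∈ W → (tail : G.Walk c y') →
    openFrom W .back c tail → openFrom W .fwd t ((q.reverse hs).append tail) := by
  intro c t y' q
  induction q with
  | nil =>
      intro _ _ htW tail htail
      rw [reverse_nil, nil_append]
      cases tail with
      | nil => trivial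
      | cons g hg tl' =>
          rw [openFrom_cons] at htail ⊢
          exact absurd (htail.1.2 not_collider_from_back) (by simpa using htW)
  | @cons u m c' f h q' ih =>
      rintro ⟨rfl, hF⟩ hW htW tail htail
      rw [reverse_cons, append_assoc, cons_append, nil_append]
      cases q' with
      | nil =>
          show openFrom W EdgeDir.fwd _ (Walk.cons EdgeDir.back _ tail)
          refine (openFrom_cons _ _).mpr ?_
          exact ⟨⟨fun _ => htW, fun hnc => absurd collider_fwd_back hnc⟩, htail⟩
      | cons g hg q₃ =>
          refine ih ?_ ?_ htW (.cons .back (isEdge_rev hs h) tail) ?_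
          · exact hF
          · intro v hv
            apply hW
            rw [support_cons, dropLast_cons_of_ne_nil _ (support_ne_nil _)]
            exact List.mem_cons_of_mem _ hv
          · refine (openFrom_cons _ _).mpr ?_
            refine ⟨⟨fun hc => absurd hc.1 (by simp [EdgeDir.arrowSnd]), fun _ => ?_⟩, htail⟩
            apply hW
            rw [support_cons, dropLast_cons_of_ne_nil _ (support_ne_nil _),
              support_cons, dropLast_cons_of_ne_nil _ (support_ne_nil _)]
            exact List.mem_cons_of_mem _ List.mem_cons_self

/-- Going down the reverse of an all-forward walk avoiding `W` entirely. -/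
lemma openFrom_down (hs : G.Symm) {W : Set V} : ∀ {c t y' : V} (q : G.Walk c t),
    q.AllFwd → (∀ u ∈ q.support, u ∉ W) → (tail : G.Walk c y') →
    openFrom W .back c tail → openFrom W .back t ((q.reverse hs).append tail) := by
  intro c t y' q
  induction q with
  | nil => intro _ _ tail htail; exact htail
  | @cons u m c' f h q' ih =>
      rintro ⟨rfl, hF⟩ hW tail htail
      rw [reverse_cons, append_assoc, cons_append, nil_append]
      refine ih hF (fun v hv => hW v (List.mem_cons_of_mem _ hv))
        (.cons .back (isEdge_rev hs h) tail) ?_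
      refine (openFrom_cons _ _).mpr ?_
      refine ⟨⟨fun hc => absurd hc.1 (by simp [EdgeDir.arrowSnd]), fun _ => ?_⟩, htail⟩
      exact hW m (List.mem_cons_of_mem _ (start_mem_support q'))

/-- Find the first node of `W` hit along an all-forward walk. -/
lemma exists_first_W {W : Set V} : ∀ {c t : V} (q : G.Walk c t), q.AllFwd →
    c ∉ W → t ∈ W → ∃ (v' : V), v' ∈ W ∧ ∃ q' : G.Walk c v', q'.AllFwd ∧
      ∀ u ∈ q'.support.dropLast, u ∉ W := by
  intro c t q
  induction q with
  | nil => intro _ hc ht; exact absurd ht hc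
  | @cons u m c' f h q' ih =>
      rintro ⟨rfl, hF⟩ hc ht
      by_cases hm : m ∈ W
      · refine ⟨m, hm, .cons .fwd h (.nil m), ⟨rfl, trivial⟩, ?_⟩
        intro v hv
        have : v = u := by simpa [support, List.dropLast] using hv
        subst this; exact hc
      · obtain ⟨v', hv', q'', hq''F, hq''W⟩ := ih hF hm ht
        refine ⟨v', hv', .cons .fwd h q'', ⟨rfl, hq''F⟩, ?_⟩
        intro v hv
        rw [support_cons, dropLast_cons_of_ne_nil _ (support_ne_nil q'')] at hv
        rcases List.mem_cons.mp hv with rfl | hv'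
        · exact hc
        · exact hq''W v hv'

end Walk

end MixedGraph

namespace MixedGraph

variable {V : Type} {G : MixedGraph V}

namespace Walk

/-- All steps of the walk are edges of `G̃`. -/
def Tld (x y : V) : {a b : V} → G.Walk a b → Prop
  | _, _, .nil _ => True
  | _, _, @Walk.cons _ _ a m _ e _ w => (G.tilde x y).IsEdge e a m ∧ w.Tld x y

/-- Transfer a walk whose steps are all `G̃`-edges to a `G̃`-walk. -/
def toTilde {x y : V} : {a b : V} → (w : G.Walk a b) → w.Tld x y → (G.tilde x y).Walk a b
  | _, _, .nil v, _ => .nil v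
  | _, _, .cons _ _ w, h => .cons _ h.1 (w.toTilde h.2)

lemma openFrom_toTilde {x y : V} {W : Set V} :
    ∀ {a b : V} (w : G.Walk a b) (h : w.Tld x y) (e : EdgeDir),
      openFrom W e a w → Walk.openFrom W e a (w.toTilde h) := by
  intro a b w
  induction w with
  | nil => intro _ _ _; trivial
  | cons f hf w' ih =>
      intro h e hop
      rw [openFrom_cons] at hop
      exact (Walk.openFrom_cons (G := G.tilde x y) h.1 (w'.toTilde h.2)).mpr
        ⟨hop.1, ih h.2 f hop.2⟩

lemma isOpen_toTilde {x y : V} {W : Set V} {a b : V} {w : G.Walk a b} (h : w.Tld x y)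
    (hop : w.IsOpen W) : (w.toTilde h).IsOpen W := by
  cases w with
  | nil => trivial
  | cons f hf w' =>
      exact (Walk.isOpen_cons (G := G.tilde x y) h.1 (w'.toTilde h.2)).mpr
        (openFrom_toTilde w' h.2 f hop)

/-- Transfer a `G̃`-walk to a `G`-walk. -/
def ofTilde {x y : V} : {a b : V} → (G.tilde x y).Walk a b → G.Walk a b
  | _, _, .nil v => .nil v
  | _, _, .cons e h w => .cons e (by cases e <;> first | exact h.1 | exact h) w.ofTilde

lemma openFrom_ofTilde {x y : V} {W : Set V} :
    ∀ {a b : V} (w : (G.tilde x y).Walk a b) (e : EdgeDir),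
      Walk.openFrom W e a w → openFrom W e a (ofTilde w) := by
  intro a b w
  induction w with
  | nil => intro _ _; trivial
  | cons f hf w' ih =>
      intro e hop
      rw [Walk.openFrom_cons (G := G.tilde x y)] at hop
      exact (openFrom_cons _ (ofTilde w')).mpr ⟨hop.1, ih f hop.2⟩

lemma isOpen_ofTilde {x y : V} {W : Set V} {a b : V} {w : (G.tilde x y).Walk a b}
    (hop : w.IsOpen W) : (ofTilde w).IsOpen W := by
  cases w with
  | nil => trivial
  | cons f hf w' =>
      exact (isOpen_cons _ (ofTilde w')).mpr
        (openFrom_ofTilde w' f ((Walk.isOpen_cons (G := G.tilde x y) hf w').mp hop))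

lemma allFwd_ofTilde {x y : V} : ∀ {a b : V} (w : (G.tilde x y).Walk a b),
    w.AllFwd → (ofTilde w).AllFwd := by
  intro a b w
  induction w with
  | nil => intro _; trivial
  | cons f hf w' ih => rintro ⟨rfl, hF⟩; exact ⟨rfl, ih hF⟩

end Walk

/-- No `G`-version of a `G̃`-walk to `y` ends with a directed segment from `x`. -/
lemma not_endsWith_ofTilde (hA : ∀ v, ¬ Relation.TransGen G.dir v v) {x y : V}
    (hxy : x ≠ y) : ∀ {a c : V} (t : (G.tilde x y).Walk a c), c = y →
    ¬ (Walk.ofTilde t).EndsWithDirFrom x := by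
  intro a c t
  induction t with
  | nil => rintro rfl h; exact hxy h.symm
  | @cons u m c e h t' ih =>
      rintro rfl hE
      rcases hE with ⟨rfl, rfl, hAF⟩ | hE'
      · -- the first edge is a directed edge x → m of G̃, but m ∈ causal
        have hdir : G.dir u m := h.1
        have hmx : m ≠ u := by
          rintro rfl
          exact hA m (Relation.TransGen.single hdir)
        have hfull : (Walk.cons EdgeDir.fwd hdir (Walk.ofTilde t') : G.Walk u c).AllFwd :=
          ⟨rfl, hAF⟩
        exact h.2 ⟨rfl, hmx, Walk.cons EdgeDir.fwd hdir (Walk.ofTilde t'), hfull,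
          Walk.allFwd_nodup hA _ hfull,
          List.mem_cons_of_mem _ (Walk.start_mem_support _)⟩
      · exact ih rfl hE'

/-- Key contradiction: an open walk continuing forward from a descendant of a causal
node either stays all-forward or hits a collider in `W ∩ forb`. -/
lemma contra_fwd {x y : V} {W : Set V}
    (hW : ∀ u ∈ W, u ∉ G.descSet (G.causal x y)) :
    ∀ {c t : V} (q : G.Walk c t), c ∈ G.descSet (G.causal x y) →
      Walk.openFrom W .fwd c q → ¬ q.AllFwd → False := by
  intro c t q
  induction q with
  | nil => intro _ _ h; exact h trivial
  | @cons u m c' f h q' ih =>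
      intro hc hop hnaf
      rw [Walk.openFrom_cons] at hop
      cases f with
      | fwd =>
          refine ih ?_ hop.2 (fun hF => hnaf ⟨rfl, hF⟩)
          obtain ⟨s, hsC, hsc⟩ := hc
          exact ⟨s, hsC, hsc.tail h⟩
      | back => exact hW u (hop.1.1 ⟨trivial, trivial⟩) hc
      | bi => exact hW u (hop.1.1 ⟨trivial, trivial⟩) hc

/-- Main induction: every step of an open walk to `y` that does not end with a
directed segment from `x` is a `G̃`-edge. -/
lemma tld_of_open (hs : G.Symm) {x y z : V} {W : Set V}
    (hW : ∀ u ∈ W, u ∉ G.descSet (G.causal x y))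
    (hzd : z ∉ G.descSet (G.causal x y)) :
    ∀ {v b : V} (s : G.Walk v b) {u : V} (e : EdgeDir) (he : G.IsEdge e u v)
      (ρ : G.Walk u z), Walk.openFrom W e v s → Walk.openFrom W e.rev u ρ →
      ¬ s.EndsWithDirFrom x → s.Tld x y := by
  intro v b s
  induction s with
  | nil => intro _ _ _ _ _ _ _; trivial
  | @cons v m c f hf s' ih =>
      intro u e he ρ hop hρ hE
      rw [Walk.openFrom_cons] at hop
      have hρ' : Walk.openFrom W f.rev v (Walk.cons e.rev (isEdge_rev hs he) ρ) := by
        rw [Walk.openFrom_cons]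
        exact ⟨okP_rev hop.1, hρ⟩
      constructor
      · -- this step is a G̃-edge
        cases f with
        | fwd =>
            refine ⟨hf, ?_⟩
            rintro ⟨rfl, hmc⟩
            have hnaf : ¬ s'.AllFwd := fun hF => hE (Or.inl ⟨rfl, rfl, hF⟩)
            exact contra_fwd hW s' ⟨m, hmc, Relation.ReflTransGen.refl⟩ hop.2 hnaf
        | back =>
            refine ⟨hf, ?_⟩
            rintro ⟨rfl, hvc⟩
            by_cases hAF : (Walk.cons e.rev (isEdge_rev hs he) ρ).AllFwd
            · exact hzd ⟨v, hvc, Walk.allFwd_rtg hAF⟩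
            · exact contra_fwd hW _ ⟨v, hvc, Relation.ReflTransGen.refl⟩ hρ' hAF
        | bi => exact hf
      · exact ih f hf _ hop.2 hρ' (fun h => hE (Or.inr h))

/-- Wrapper: an open walk from `z` to `y` not ending with a directed segment from `x`
consists entirely of `G̃`-edges. -/
lemma tld_of_open' (hs : G.Symm) {x y z : V} {W : Set V}
    (hW : ∀ u ∈ W, u ∉ G.descSet (G.causal x y))
    (hzd : z ∉ G.descSet (G.causal x y)) (hzx : z ≠ x)
    {b : V} (w : G.Walk z b) (hop : w.IsOpen W) (hE : ¬ w.EndsWithDirFrom x) : w.Tld x y := by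
  cases w with
  | nil => trivial
  | @cons z m c f hf s' =>
      constructor
      · cases f with
        | fwd =>
            refine ⟨hf, ?_⟩
            rintro ⟨rfl, _⟩
            exact hzx rfl
        | back =>
            refine ⟨hf, ?_⟩
            rintro ⟨rfl, hzc⟩
            exact hzd ⟨z, hzc, Relation.ReflTransGen.refl⟩
        | bi => exact hf
      · exact tld_of_open hs hW hzd s' f hf (.nil z) hop trivial
          (fun h => hE (Or.inr h))

end MixedGraph

namespace MixedGraph

variable {V : Type} {G : MixedGraph V}

lemma causal_split (hA : ∀ v, ¬ Relation.TransGen G.dir v v) {x y c : V} {W : Set V}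
    (hc : c ∈ G.causal x y)
    (h1 : ∀ w : G.Walk x y, w.AllFwd → w.support.Nodup → ∀ u ∈ w.support, u ∉ W) :
    ∃ (ω₁ : G.Walk x c) (ω₂ : G.Walk c y), ω₁.AllFwd ∧ ω₂.AllFwd ∧
      (∀ u ∈ ω₁.support, u ∉ W) ∧ (∀ u ∈ ω₂.support, u ∉ W) ∧
      Relation.TransGen G.dir x c := by
  obtain ⟨hcx, ω, hωF, hωN, hcS⟩ := hc
  obtain ⟨ω₁, ω₂, heq⟩ := Walk.split_at_mem ω c hcS
  have hωWall : ∀ u ∈ ω.support, u ∉ W := h1 ω hωF hωN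
  have hF12 : ω₁.AllFwd ∧ ω₂.AllFwd := Walk.allFwd_append.mp (heq ▸ hωF)
  have hsupp : ω.support = ω₁.support ++ ω₂.support.tail := by
    rw [heq, Walk.support_append]
  have hsub1 : ∀ u ∈ ω₁.support, u ∈ ω.support := by
    intro u hu; rw [hsupp]; exact List.mem_append_left _ hu
  have hsub2 : ∀ u ∈ ω₂.support, u ∈ ω.support := by
    intro u hu
    rw [Walk.support_head ω₂] at hu
    rcases List.mem_cons.mp hu with rfl | hu'
    · exact hcS
    · rw [hsupp]; exact List.mem_append_right _ hu'
  have hTxc : Relation.TransGen G.dir x c := by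
    rcases Relation.reflTransGen_iff_eq_or_transGen.mp
      (Walk.allFwd_rtg_of_mem hωF c hcS) with h | h
    · exact absurd h hcx
    · exact h
  exact ⟨ω₁, ω₂, hF12.1, hF12.2, fun u hu => hωWall u (hsub1 u hu),
    fun u hu => hωWall u (hsub2 u hu), hTxc⟩

/-- Case A: a node of `W` is a descendant of a causal node. -/
lemma caseA (hsym : G.Symm) (hA : ∀ v, ¬ Relation.TransGen G.dir v v)
    {x y : V} {W Z : Set V} (hxW : x ∉ W)
    (h1 : ∀ w : G.Walk x y, w.AllFwd → w.support.Nodup → ∀ u ∈ w.support, u ∉ W)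
    (h2 : ∃ z ∈ Z, ∃ u : G.Walk z x, u.IsOpen W)
    (hWd : ∃ u₀ ∈ W, u₀ ∈ G.descSet (G.causal x y)) :
    ∃ z ∈ Z, ∃ w : G.Walk z y, w.IsOpen W ∧ ¬ w.EndsWithDirFrom x := by
  obtain ⟨v0, hv0W, c, hc, hcv⟩ := hWd
  obtain ⟨ω₁, ω₂, hF1, hF2, hW1, hW2, hTxc⟩ := causal_split hA hc h1
  have hcW : c ∉ W := hW2 c (Walk.start_mem_support _)
  have hnox : ∀ u, Relation.ReflTransGen G.dir c u → u ≠ x := by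
    rintro u hcu rfl
    exact hA u (hTxc.trans_left hcu)
  obtain ⟨q0, hq0F⟩ := Walk.exists_allFwd_of_rtg hcv
  obtain ⟨v', hv'W, q', hq'F, hq'dl⟩ := Walk.exists_first_W q0 hq0F hcW hv0W
  obtain ⟨z, hz, u, hu⟩ := h2
  -- the mountain part
  set N₂ : G.Walk v' y := (q'.reverse hsym).append ω₂ with hN₂
  have H₂ : Walk.openFrom W .fwd v' N₂ :=
    Walk.openFrom_mountain hsym q' hq'F hq'dl hv'W ω₂
      (Walk.openFrom_allFwd_avoid ω₂ hF2 hW2 .back)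
  have H₁ : Walk.openFrom W .fwd c (q'.append N₂) :=
    Walk.openFrom_up q' hq'F hq'dl H₂
  have H₀ : Walk.openFrom W .fwd x (ω₁.append (q'.append N₂)) :=
    Walk.openFrom_up ω₁ hF1 (fun v hv => hW1 v (List.dropLast_subset _ hv)) H₁
  have hnAF2 : ¬ N₂.AllFwd := by
    intro hAF
    have hq'AF : (q'.reverse hsym).AllFwd := (Walk.allFwd_append.mp hAF).1
    cases q' with
    | nil => exact hcW hv'W
    | cons g hg q₃ =>
        rw [Walk.reverse_cons] at hq'AF
        obtain ⟨h, -⟩ := (Walk.allFwd_append.mp hq'AF).2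
        obtain ⟨rfl, -⟩ := hq'F
        exact nomatch h
  have hxN₂ : ¬ N₂.EndsWithDirFrom x := by
    intro hE
    have hmem := Walk.mem_support_of_endsWith N₂ hE
    rw [hN₂, Walk.support_append, Walk.support_reverse] at hmem
    rcases List.mem_append.mp hmem with hm | hm
    · exact hnox x (Walk.allFwd_rtg_of_mem hq'F x (List.mem_reverse.mp hm)) rfl
    · exact hnox x (Walk.allFwd_rtg_of_mem hF2 x (List.tail_subset _ hm)) rfl
  have HM : ∀ e, Walk.openFrom W e x (ω₁.append (q'.append N₂)) := by
    cases ω₁ with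
    | nil => exact absurd hTxc (hA x)
    | cons f h0 ω₁' =>
        obtain ⟨rfl, -⟩ := hF1
        intro e
        rw [Walk.cons_append, Walk.openFrom_cons] at H₀ ⊢
        exact ⟨⟨fun h => absurd h not_collider_into_fwd, fun _ => hxW⟩, H₀.2⟩
  refine ⟨z, hz, u.append (ω₁.append (q'.append N₂)), Walk.isOpen_append hu HM, ?_⟩
  intro hE
  rcases Walk.endsWith_append u _ hE with hE' | hAF
  · rcases Walk.endsWith_append ω₁ _ hE' with hE'' | hAF
    · rcases Walk.endsWith_append q' _ hE'' with hE''' | hAF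
      · exact hxN₂ hE'''
      · exact hnAF2 hAF
    · exact hnAF2 (Walk.allFwd_append.mp hAF).2
  · exact hnAF2 (Walk.allFwd_append.mp (Walk.allFwd_append.mp hAF).2).2

/-- Case B: a node of `Z` is a descendant of a causal node, and no node of `W` is. -/
lemma caseB (hsym : G.Symm) (hA : ∀ v, ¬ Relation.TransGen G.dir v v)
    {x y v : V} {W : Set V}
    (h1 : ∀ w : G.Walk x y, w.AllFwd → w.support.Nodup → ∀ u ∈ w.support, u ∉ W)
    (hWd : ∀ u ∈ W, u ∉ G.descSet (G.causal x y))
    (hvD : v ∈ G.descSet (G.causal x y)) :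
    ∃ w : G.Walk v y, w.IsOpen W ∧ ¬ w.EndsWithDirFrom x := by
  obtain ⟨c, hc, hcv⟩ := hvD
  obtain ⟨ω₁, ω₂, hF1, hF2, hW1, hW2, hTxc⟩ := causal_split hA hc h1
  have hnox : ∀ u, Relation.ReflTransGen G.dir c u → u ≠ x := by
    rintro u hcu rfl
    exact hA u (hTxc.trans_left hcu)
  obtain ⟨q, hqF⟩ := Walk.exists_allFwd_of_rtg hcv
  have hqW : ∀ u ∈ q.support, u ∉ W := by
    intro u hu huW
    exact hWd u huW ⟨c, hc, Walk.allFwd_rtg_of_mem hqF u hu⟩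
  refine ⟨(q.reverse hsym).append ω₂, ?_, ?_⟩
  · exact Walk.isOpen_of_openFrom (Walk.openFrom_down hsym q hqF hqW ω₂
      (Walk.openFrom_allFwd_avoid ω₂ hF2 hW2 .back))
  · intro hE
    have hmem := Walk.mem_support_of_endsWith _ hE
    rw [Walk.support_append, Walk.support_reverse] at hmem
    rcases List.mem_append.mp hmem with hm | hm
    · exact hnox x (Walk.allFwd_rtg_of_mem hqF x (List.mem_reverse.mp hm)) rfl
    · exact hnox x (Walk.allFwd_rtg_of_mem hF2 x (List.tail_subset _ hm)) rfl

end MixedGraph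

/-- Let `{x,y}`, `Z`, `W` be pairwise disjoint node sets in an ADMG `G`
(with `x` and `y` single nodes). Then `(Z,W)` is a valid conditional instrumental set
relative to `(x,y)` in `G` if and only if (i) no directed path from `x` to `y` contains a
node of `W`, (ii) there exists a walk from `Z` to `x` that is open given `W`, and
(iii) there does not exist a walk from `Z` to `y` that is open given `W` and does not end
with a segment of the form `x → ⋯ → y`. -/
theorem valid_cis_iff_walk_conditions {V : Type} (G : MixedGraph V) (hG : G.IsADMG)
    (x y : V) (Z W : Set V)
    (hxy : x ≠ y) (hxZ : x ∉ Z) (hxW : x ∉ W) (hyZ : y ∉ Z) (hyW : y ∉ W)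
    (hZW : Disjoint Z W) :
    G.ValidCIS x y Z W ↔
      ((¬ ∃ w : G.Walk x y, w.AllFwd ∧ w.support.Nodup ∧ ∃ v ∈ w.support, v ∈ W) ∧
       (∃ z ∈ Z, ∃ w : G.Walk z x, w.IsOpen W) ∧
       ¬ ∃ z ∈ Z, ∃ w : G.Walk z y, w.IsOpen W ∧ ¬ w.EndsWithDirFrom x) := by
  open MixedGraph in
  obtain ⟨hsym, hA⟩ := hG
  have hts : (G.tilde x y).Symm := fun a b h => hsym a b h
  constructor
  · rintro ⟨-, -, -, -, -, -, hforb, hconn, hntld⟩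
    have hforb' : ∀ v, v ∈ Z ∪ W → v ∉ G.forb x y := by
      intro v hv hvf
      have hmem : v ∈ (Z ∪ W) ∩ G.forb x y := ⟨hv, hvf⟩
      rw [hforb] at hmem
      exact hmem
    refine ⟨?_, ?_, ?_⟩
    · rintro ⟨w, hAF, hND, v, hvS, hvW⟩
      apply hforb' v (Or.inr hvW)
      by_cases hvx : v = x
      · exact Or.inr hvx
      · exact Or.inl ⟨v, ⟨hvx, w, hAF, hND, hvS⟩, Relation.ReflTransGen.refl⟩
    · obtain ⟨x', hx', z, hz, p, hp⟩ := hconn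
      have hx'' : x' = x := hx'
      subst hx''
      exact ⟨z, hz, p.reverse hsym, MixedGraph.Walk.isOpen_reverse hsym hp⟩
    · rintro ⟨z, hz, w, hw, hE⟩
      have hW' : ∀ u ∈ W, u ∉ G.descSet (G.causal x y) := fun u hu hd =>
        hforb' u (Or.inr hu) (Or.inl hd)
      have hzd : z ∉ G.descSet (G.causal x y) := fun hd =>
        hforb' z (Or.inl hz) (Or.inl hd)
      have hzx : z ≠ x := fun h => hxZ (h ▸ hz)
      have hT := MixedGraph.tld_of_open' hsym hW' hzd hzx w hw hE
      apply hntld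
      refine ⟨y, rfl, z, hz, (MixedGraph.Walk.toTilde w hT).reverse hts, ?_⟩
      exact MixedGraph.Walk.isOpen_reverse hts (MixedGraph.Walk.isOpen_toTilde hT hw)
  · rintro ⟨h1, h2, h3⟩
    have h1' : ∀ w : G.Walk x y, w.AllFwd → w.support.Nodup → ∀ u ∈ w.support, u ∉ W :=
      fun w hF hN u hu huW => h1 ⟨w, hF, hN, u, hu, huW⟩
    have key : ∀ v, v ∈ Z ∪ W → v ∉ G.descSet (G.causal x y) := by
      intro v hv hd
      by_cases hWd : ∃ u₀ ∈ W, u₀ ∈ G.descSet (G.causal x y)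
      · exact h3 (MixedGraph.caseA hsym hA hxW h1' h2 hWd)
      · have hWd' : ∀ u ∈ W, u ∉ G.descSet (G.causal x y) := by
          intro u hu hud
          exact hWd ⟨u, hu, hud⟩
        rcases hv with hvZ | hvW
        · obtain ⟨w, hw, hE⟩ := MixedGraph.caseB hsym hA h1' hWd' hd
          exact h3 ⟨v, hvZ, w, hw, hE⟩
        · exact hWd' v hvW hd
    refine ⟨hxy, hxZ, hxW, hyZ, hyW, hZW, ?_, ?_, ?_⟩
    · rw [Set.eq_empty_iff_forall_notMem]
      rintro v ⟨hv1, hv2⟩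
      rcases hv2 with hd | hx
      · exact key v hv1 hd
      · have hvx : v = x := hx
        subst hvx
        rcases hv1 with h | h
        exacts [hxZ h, hxW h]
    · obtain ⟨z, hz, u, hu⟩ := h2
      exact ⟨x, rfl, z, hz, u.reverse hsym, MixedGraph.Walk.isOpen_reverse hsym hu⟩
    · rintro ⟨y', hy', z, hz, t, ht⟩
      have hy'' : y' = y := hy'
      subst hy''
      apply h3
      exact ⟨z, hz, MixedGraph.Walk.ofTilde (t.reverse hts),
        MixedGraph.Walk.isOpen_ofTilde (MixedGraph.Walk.isOpen_reverse hts ht),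
        MixedGraph.not_endsWith_ofTilde hA hxy _ rfl⟩
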